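/- The number of dominating sets of an n-vertex graph with maximum degree Δ is at most (2^{Δ+1} − 1)^{n/(Δ+1)}. -/

import Mathlib

open Finset

lemma geom_superadd {t : ℕ} (ht : t ≠ 0) (p r : Fin t → ℝ) (hp : ∀ i, 0 ≤ p i)
    (hr : ∀ i, 0 ≤ r i) :
    (∏ i, p i) ^ ((t:ℝ)⁻¹) + (∏ i, r i) ^ ((t:ℝ)⁻¹)
      ≤ (∏ i, (p i + r i)) ^ ((t:ℝ)⁻¹) := by
  have htR : (0:ℝ) < (t:ℝ)⁻¹ := by positivity
  by_cases hc : ∃ i, p i + r i = 0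
  · obtain ⟨i, hi⟩ := hc
    have hpi : p i = 0 := by have := hp i; have := hr i; linarith
    have hri : r i = 0 := by have := hp i; have := hr i; linarith
    rw [Finset.prod_eq_zero (mem_univ i) hpi, Finset.prod_eq_zero (mem_univ i) hri,
      Real.zero_rpow (ne_of_gt htR), add_zero]
    exact Real.rpow_nonneg (Finset.prod_nonneg fun j _ => by have := hp j; have := hr j; linarith) _
  push_neg at hc
  have hcpos : ∀ i, 0 < p i + r i := fun i =>
    lt_of_le_of_ne (by have := hp i; have := hr i; linarith) (Ne.symm (hc i))
  set c : Fin t → ℝ := fun i => p i + r i with hcdef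
  have hM : 0 < ∏ i, c i := Finset.prod_pos fun i _ => hcpos i
  have hMr : 0 < (∏ i, c i) ^ ((t:ℝ)⁻¹) := Real.rpow_pos_of_pos hM _
  set w : Fin t → ℝ := fun _ => (t:ℝ)⁻¹ with hwdef
  have hw : ∑ i, w i = 1 := by
    simp [hwdef, Finset.sum_const, Finset.card_univ]
    field_simp
  have key : ∀ (f : Fin t → ℝ), (∀ i, 0 ≤ f i) →
      (∏ i, f i) ^ ((t:ℝ)⁻¹) / (∏ i, c i) ^ ((t:ℝ)⁻¹) ≤ ∑ i, w i * (f i / c i) := by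
    intro f hf
    have h1 := Real.geom_mean_le_arith_mean_weighted univ w (fun i => f i / c i)
      (fun i _ => le_of_lt htR) hw (fun i _ => div_nonneg (hf i) (hcpos i).le)
    calc (∏ i, f i) ^ ((t:ℝ)⁻¹) / (∏ i, c i) ^ ((t:ℝ)⁻¹)
        = (∏ i, f i / c i) ^ ((t:ℝ)⁻¹) := by
          rw [← Real.div_rpow (Finset.prod_nonneg fun i _ => hf i) hM.le,
            Finset.prod_div_distrib]
      _ = ∏ i, (f i / c i) ^ ((t:ℝ)⁻¹) :=
          (Real.finset_prod_rpow univ _ (fun i _ => div_nonneg (hf i) (hcpos i).le) _).symm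
      _ ≤ ∑ i, w i * (f i / c i) := h1
  have h1 := key p hp
  have h2 := key r hr
  have hsum : (∑ i, w i * (p i / c i)) + (∑ i, w i * (r i / c i)) = 1 := by
    rw [← Finset.sum_add_distrib]
    calc (∑ i, (w i * (p i / c i) + w i * (r i / c i))) = ∑ i, w i := by
          apply Finset.sum_congr rfl; intro i _
          rw [← mul_add, ← add_div, div_self (hc i), mul_one]
      _ = 1 := hw
  have h3 := add_le_add h1 h2
  rw [← add_div, hsum] at h3
  exact (div_le_one hMr).mp h3

lemma mink {t : ℕ} (a b R : ℕ) (p r : Fin t → ℕ)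
    (ha : a ^ t ≤ (∏ i, p i) * R) (hb : b ^ t ≤ (∏ i, r i) * R) :
    (a + b) ^ t ≤ (∏ i, (p i + r i)) * R := by
  rcases Nat.eq_zero_or_pos t with rfl | ht
  · simpa using ha
  have ht' : (t:ℕ) ≠ 0 := ht.ne'
  have key : ∀ (x : ℕ) (f : Fin t → ℕ), x ^ t ≤ (∏ i, f i) * R →
      (x:ℝ) ≤ (((∏ i, f i) * R : ℕ) : ℝ) ^ ((t:ℝ)⁻¹) := by
    intro x f hx
    have : ((x:ℝ) ^ t) ^ ((t:ℝ)⁻¹) ≤ (((∏ i, f i) * R : ℕ):ℝ) ^ ((t:ℝ)⁻¹) :=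
      Real.rpow_le_rpow (by positivity) (by exact_mod_cast hx) (by positivity)
    rwa [Real.pow_rpow_inv_natCast (by positivity) ht'] at this
  have hab : ((a:ℝ) + b) ≤ ((∏ i, ((p i : ℝ))) * R) ^ ((t:ℝ)⁻¹) + ((∏ i, ((r i : ℝ))) * R) ^ ((t:ℝ)⁻¹) := by
    have := add_le_add (key a p ha) (key b r hb)
    convert this using 3 <;> push_cast <;> rfl
  have hsup := geom_superadd ht' (fun i => (p i : ℝ)) (fun i => (r i : ℝ))
    (fun i => by positivity) (fun i => by positivity)
  have step : ((∏ i, ((p i:ℝ))) * R) ^ ((t:ℝ)⁻¹) + ((∏ i, ((r i:ℝ))) * R) ^ ((t:ℝ)⁻¹)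
      ≤ ((∏ i, ((p i:ℝ) + (r i:ℝ))) * R) ^ ((t:ℝ)⁻¹) := by
    rw [Real.mul_rpow (by positivity) (by positivity),
      Real.mul_rpow (by positivity) (by positivity),
      Real.mul_rpow (by positivity) (by positivity), ← add_mul]
    exact mul_le_mul_of_nonneg_right hsup (by positivity)
  have final : ((a:ℝ) + b) ^ t ≤ (∏ i, ((p i:ℝ) + (r i:ℝ))) * R := by
    calc ((a:ℝ) + b) ^ t ≤ (((∏ i, ((p i:ℝ) + (r i:ℝ))) * R) ^ ((t:ℝ)⁻¹)) ^ t :=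
          pow_le_pow_left₀ (by positivity) (le_trans hab step) t
      _ = _ := Real.rpow_inv_natCast_pow (by positivity) ht'
  have : (((a + b) ^ t : ℕ) : ℝ) ≤ (((∏ i, (p i + r i)) * R : ℕ) : ℝ) := by
    push_cast
    exact final
  exact_mod_cast this

lemma mink' {α : Type*} (m : Multiset α) (p r : α → ℕ) (a b R : ℕ)
    (ha : a ^ m.card ≤ (m.map p).prod * R) (hb : b ^ m.card ≤ (m.map r).prod * R) :
    (a + b) ^ m.card ≤ (m.map (fun x => p x + r x)).prod * R := by
  induction m using Quotient.inductionOn with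
  | h l =>
    simp only [Multiset.quot_mk_to_coe] at ha hb ⊢
    have conv : ∀ (f : α → ℕ), ((l : Multiset α).map f).prod = ∏ i : Fin l.length, f (l.get i) := by
      intro f
      have : l.map f = List.ofFn (fun i => f (l.get i)) := by
        conv_lhs => rw [← List.ofFn_get l]
        rw [List.map_ofFn]
        rfl
      rw [Multiset.map_coe, Multiset.prod_coe, this, List.prod_ofFn]
    have hcard : (l : Multiset α).card = l.length := rfl
    rw [hcard, conv] at ha hb ⊢
    exact mink a b R _ _ ha hb

def tr {V : Type*} [DecidableEq V] (F : Finset (Finset V)) (A : Finset V) : ℕ :=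
  (F.image (· ∩ A)).card

lemma prod_map_le_prod_map {α : Type*} (m : Multiset α) (f g : α → ℕ)
    (h : ∀ a ∈ m, f a ≤ g a) : (m.map f).prod ≤ (m.map g).prod := by
  induction m using Multiset.induction_on with
  | empty => simp
  | cons a s ih =>
    simp only [Multiset.map_cons, Multiset.prod_cons]
    exact Nat.mul_le_mul (h a (Multiset.mem_cons_self a s))
      (ih fun b hb => h b (Multiset.mem_cons_of_mem hb))

theorem shearer {V : Type*} [DecidableEq V] (t : ℕ) (S : Finset V) :
    ∀ (C : Multiset (Finset V)), (∀ A ∈ C, A ⊆ S) →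
    (∀ v ∈ S, Multiset.countP (fun A => v ∈ A) C = t) →
    ∀ F : Finset (Finset V), F.Nonempty → (∀ D ∈ F, D ⊆ S) →
    F.card ^ t ≤ (C.map (fun A => tr F A)).prod := by
  induction S using Finset.strongInduction with
  | _ S ih =>
  intro C hCsub hCcount F hFne hFsub
  rcases S.eq_empty_or_nonempty with rfl | ⟨x, hx⟩
  · -- base case
    have hF : F = {∅} := by
      apply Finset.eq_singleton_iff_nonempty_unique_mem.mpr
      exact ⟨hFne, fun D hD => Finset.subset_empty.mp (hFsub D hD)⟩
    have hprod : 0 < (C.map (fun A => tr F A)).prod := by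
      apply Multiset.prod_pos
      intro n hn
      obtain ⟨A, hA, rfl⟩ := Multiset.mem_map.mp hn
      exact Finset.card_pos.mpr (hFne.image _)
    have h1 : F.card ^ t = 1 := by rw [hF]; simp
    rw [h1]; omega
  · -- inductive step
    have hS' : S.erase x ⊂ S := Finset.erase_ssubset hx
    set S' := S.erase x with hS'def
    set C1 := C.filter (fun A => x ∈ A) with hC1def
    set C0 := C.filter (fun A => x ∉ A) with hC0def
    have hsplit : C1 + C0 = C := Multiset.filter_add_not _ C
    have hC1card : Multiset.card C1 = t := by
      rw [hC1def, ← Multiset.countP_eq_card_filter]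
      exact hCcount x hx
    set F0 := F.filter (fun D => x ∉ D) with hF0def
    set F1' := F.filter (fun D => x ∈ D) with hF1'def
    set F1 := F1'.image (fun D => D.erase x) with hF1def
    have hFcard : F.card = F0.card + F1'.card := by
      rw [hF0def, hF1'def]
      rw [add_comm]
      exact (Finset.card_filter_add_card_filter_not (fun D => x ∈ D)).symm
    have hF1card : F1.card = F1'.card := by
      apply Finset.card_image_of_injOn
      intro D hD E hE hDE
      have hxD : x ∈ D := (Finset.mem_filter.mp hD).2
      have hxE : x ∈ E := (Finset.mem_filter.mp hE).2
      rw [← Finset.insert_erase hxD, ← Finset.insert_erase hxE]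
      exact congrArg (insert x) hDE
    -- the new cover
    set C' := C1.map (fun A => A.erase x) + C0 with hC'def
    have hC'sub : ∀ A ∈ C', A ⊆ S' := by
      intro A hA
      rcases Multiset.mem_add.mp hA with hA | hA
      · obtain ⟨B, hB, rfl⟩ := Multiset.mem_map.mp hA
        exact Finset.erase_subset_erase x (hCsub B (Multiset.mem_filter.mp hB).1)
      · have h := Multiset.mem_filter.mp hA
        exact Finset.subset_erase.mpr ⟨hCsub A h.1, h.2⟩
    have hC'count : ∀ v ∈ S', Multiset.countP (fun A => v ∈ A) C' = t := by
      intro v hv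
      have hvx : v ≠ x := (Finset.mem_erase.mp hv).1
      have hvS : v ∈ S := (Finset.mem_erase.mp hv).2
      rw [hC'def, Multiset.countP_add]
      have h1 : Multiset.countP (fun A => v ∈ A) (C1.map (fun A => A.erase x))
          = Multiset.countP (fun A => v ∈ A) C1 := by
        rw [Multiset.countP_map]
        rw [Multiset.countP_eq_card_filter]
        congr 1
        apply Multiset.filter_congr
        intro A _
        simp [Finset.mem_erase, hvx]
      rw [h1, ← Multiset.countP_add, hsplit]
      exact hCcount v hvS
    -- trace identities
    have inter_erase : ∀ (D A : Finset V), x ∉ D → D ∩ A.erase x = D ∩ A := by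
      intro D A hxD
      ext y
      simp only [Finset.mem_inter, Finset.mem_erase]
      exact ⟨fun h => ⟨h.1, h.2.2⟩, fun h => ⟨h.1, fun he => hxD (he ▸ h.1), h.2⟩⟩
    have tr0_erase : ∀ A, tr F0 (A.erase x) = tr F0 A := by
      intro A
      unfold tr
      congr 1
      apply Finset.image_congr
      intro D hD
      exact inter_erase D A (Finset.mem_filter.mp hD).2
    have tr1_erase : ∀ A, tr F1 (A.erase x) = tr F1' A := by
      intro A
      unfold tr
      rw [hF1def, Finset.image_image]
      have himg : F1'.image ((· ∩ A.erase x) ∘ (fun D => D.erase x))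
          = (F1'.image (· ∩ A)).image (fun T => T.erase x) := by
        rw [Finset.image_image]
        apply Finset.image_congr
        intro D _
        show D.erase x ∩ A.erase x = (D ∩ A).erase x
        ext y
        simp only [Finset.mem_inter, Finset.mem_erase]
        tauto
      rw [himg]
      apply Finset.card_image_of_injOn
      intro T hT T' hT' hTT'
      obtain ⟨D, hD, rfl⟩ := Finset.mem_image.mp hT
      obtain ⟨D', hD', rfl⟩ := Finset.mem_image.mp hT'
      have hTT'' : (D ∩ A).erase x = (D' ∩ A).erase x := hTT'
      by_cases hxA : x ∈ A
      · have h1 : x ∈ D ∩ A := Finset.mem_inter.mpr ⟨(Finset.mem_filter.mp hD).2, hxA⟩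
        have h2 : x ∈ D' ∩ A := Finset.mem_inter.mpr ⟨(Finset.mem_filter.mp hD').2, hxA⟩
        rw [← Finset.insert_erase h1, ← Finset.insert_erase h2]
        exact congrArg (insert x) hTT''
      · have e1 : (D ∩ A).erase x = D ∩ A :=
          Finset.erase_eq_self.mpr (fun h => hxA (Finset.mem_inter.mp h).2)
        have e2 : (D' ∩ A).erase x = D' ∩ A :=
          Finset.erase_eq_self.mpr (fun h => hxA (Finset.mem_inter.mp h).2)
        rw [e1, e2] at hTT''
        exact hTT''
    have tr_split : ∀ A, x ∈ A → tr F0 A + tr F1' A ≤ tr F A := by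
      intro A hxA
      unfold tr
      have hdisj : Disjoint (F0.image (· ∩ A)) (F1'.image (· ∩ A)) := by
        rw [Finset.disjoint_left]
        intro T hT0 hT1
        obtain ⟨D, hD, rfl⟩ := Finset.mem_image.mp hT0
        obtain ⟨D', hD', hDD'⟩ := Finset.mem_image.mp hT1
        have hx0 : x ∉ D ∩ A := fun h => (Finset.mem_filter.mp hD).2 (Finset.mem_inter.mp h).1
        have hx1 : x ∈ D' ∩ A := Finset.mem_inter.mpr ⟨(Finset.mem_filter.mp hD').2, hxA⟩
        exact hx0 (hDD' ▸ hx1)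
      have hsub : (F0.image (· ∩ A)) ∪ (F1'.image (· ∩ A)) ⊆ F.image (· ∩ A) :=
        Finset.union_subset (Finset.image_subset_image (Finset.filter_subset _ _))
          (Finset.image_subset_image (Finset.filter_subset _ _))
      calc (F0.image (· ∩ A)).card + (F1'.image (· ∩ A)).card
          = ((F0.image (· ∩ A)) ∪ (F1'.image (· ∩ A))).card :=
            (Finset.card_union_of_disjoint hdisj).symm
        _ ≤ _ := Finset.card_le_card hsub
    have tr0_mono : ∀ B, tr F0 B ≤ tr F B :=
      fun B => Finset.card_le_card (Finset.image_subset_image (Finset.filter_subset _ _))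
    have tr1'_mono : ∀ B, tr F1' B ≤ tr F B :=
      fun B => Finset.card_le_card (Finset.image_subset_image (Finset.filter_subset _ _))
    have tr1_eq : ∀ B, x ∉ B → tr F1 B = tr F1' B := by
      intro B hxB
      unfold tr
      rw [hF1def, Finset.image_image]
      congr 1
      apply Finset.image_congr
      intro D _
      show D.erase x ∩ B = D ∩ B
      ext y
      simp only [Finset.mem_inter, Finset.mem_erase]
      exact ⟨fun h => ⟨h.1.2, h.2⟩, fun h => ⟨⟨fun he => hxB (he ▸ h.2), h.1⟩, h.2⟩⟩
    -- apply IH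
    have IH : ∀ G : Finset (Finset V), G.Nonempty → (∀ D ∈ G, D ⊆ S') →
        G.card ^ t ≤ (C1.map (fun A => tr G (A.erase x))).prod * (C0.map (fun A => tr G A)).prod := by
      intro G hGne hGsub
      have := ih S' hS' C' hC'sub hC'count G hGne hGsub
      rwa [hC'def, Multiset.map_add, Multiset.prod_add, Multiset.map_map] at this
    rw [← hsplit, Multiset.map_add, Multiset.prod_add]
    have hC0x : ∀ B ∈ C0, x ∉ B := fun B hB => (Multiset.mem_filter.mp hB).2
    have hC1x : ∀ A ∈ C1, x ∈ A := fun A hA => (Multiset.mem_filter.mp hA).2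
    rcases F1'.eq_empty_or_nonempty with hF1e | hF1ne
    · -- all dominating sets avoid x : F = F0
      have hFF : F0 = F := by
        rw [hF0def]
        apply Finset.filter_eq_self.mpr
        intro D hD hxD
        have : D ∈ F1' := Finset.mem_filter.mpr ⟨hD, hxD⟩
        rw [hF1e] at this
        exact absurd this (Finset.notMem_empty D)
      have hsub0 : ∀ D ∈ F0, D ⊆ S' := by
        intro D hD
        exact Finset.subset_erase.mpr ⟨hFsub D (Finset.filter_subset _ _ hD),
          (Finset.mem_filter.mp hD).2⟩
      have h := IH F0 (hFF.symm ▸ hFne) hsub0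
      simp only [tr0_erase] at h
      rw [hFF] at h
      exact h
    rcases F0.eq_empty_or_nonempty with hF0e | hF0ne
    · -- all dominating sets contain x : F = F1'
      have hFF : F1' = F := by
        rw [hF1'def]
        apply Finset.filter_eq_self.mpr
        intro D hD
        by_contra hxD
        have : D ∈ F0 := Finset.mem_filter.mpr ⟨hD, hxD⟩
        rw [hF0e] at this
        exact absurd this (Finset.notMem_empty D)
      have hF1ne : F1.Nonempty := Finset.Nonempty.image (hFF.symm ▸ hFne) _
      have hsub1 : ∀ D ∈ F1, D ⊆ S' := by
        intro D hD
        obtain ⟨E, hE, rfl⟩ := Finset.mem_image.mp hD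
        exact Finset.erase_subset_erase x (hFsub E (Finset.filter_subset _ _ hE))
      have h := IH F1 hF1ne hsub1
      simp only [tr1_erase] at h
      have hcard : F.card = F1.card := by rw [hF1card, hFF]
      rw [← hcard] at h
      refine le_trans h (Nat.mul_le_mul ?_ ?_)
      · refine le_of_eq (congrArg Multiset.prod (Multiset.map_congr rfl ?_))
        intro A _
        rw [hFF]
      · apply prod_map_le_prod_map
        intro B hB
        rw [tr1_eq B (hC0x B hB), hFF]
    · -- main case
      have hsub0 : ∀ D ∈ F0, D ⊆ S' := by
        intro D hD
        exact Finset.subset_erase.mpr ⟨hFsub D (Finset.filter_subset _ _ hD),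
          (Finset.mem_filter.mp hD).2⟩
      have hsub1 : ∀ D ∈ F1, D ⊆ S' := by
        intro D hD
        obtain ⟨E, hE, rfl⟩ := Finset.mem_image.mp hD
        exact Finset.erase_subset_erase x (hFsub E (Finset.filter_subset _ _ hE))
      have hF1ne : F1.Nonempty := hF1ne.image _
      set R := (C0.map (fun A => tr F A)).prod with hRdef
      have ha : F0.card ^ t ≤ (C1.map (fun A => tr F0 A)).prod * R := by
        have h := IH F0 hF0ne hsub0
        simp only [tr0_erase] at h
        refine le_trans h (Nat.mul_le_mul le_rfl ?_)
        exact prod_map_le_prod_map _ _ _ (fun B _ => tr0_mono B)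
      have hb : F1'.card ^ t ≤ (C1.map (fun A => tr F1' A)).prod * R := by
        have h := IH F1 hF1ne hsub1
        simp only [tr1_erase] at h
        rw [hF1card] at h
        refine le_trans h (Nat.mul_le_mul le_rfl ?_)
        apply prod_map_le_prod_map
        intro B hB
        rw [tr1_eq B (hC0x B hB)]
        exact tr1'_mono B
      have hm := mink' C1 (fun A => tr F0 A) (fun A => tr F1' A) F0.card F1'.card R
        (by rwa [hC1card]) (by rwa [hC1card])
      rw [hC1card] at hm
      rw [hFcard]
      refine le_trans hm (Nat.mul_le_mul ?_ le_rfl)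
      apply prod_map_le_prod_map
      intro A hA
      exact tr_split A (hC1x A hA)

lemma countP_bind {α β : Type*} (s : Multiset α) (f : α → Multiset β) (p : β → Prop)
    [DecidablePred p] :
    Multiset.countP p (s.bind f) = (s.map (fun a => Multiset.countP p (f a))).sum := by
  induction s using Multiset.induction_on with
  | empty => simp
  | cons a s ih => simp [Multiset.cons_bind, Multiset.countP_add, ih]

lemma countP_replicate {α : Type*} (n : ℕ) (a : α) (p : α → Prop) [DecidablePred p] :
    Multiset.countP p (Multiset.replicate n a) = if p a then n else 0 := by
  induction n with
  | zero => simp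
  | succ n ih =>
    rw [Multiset.replicate_succ, Multiset.countP_cons]
    rw [ih]
    by_cases h : p a <;> simp [h]

lemma count_cover {V : Type*} [Fintype V] [DecidableEq V]
    (G : SimpleGraph V) [DecidableRel G.Adj] (Δ : ℕ)
    (hdeg : ∀ v, G.degree v ≤ Δ) (u : V) :
    Multiset.countP (fun A => u ∈ A)
      ((Finset.univ.val.map (fun v => insert v (G.neighborFinset v)))
        + Finset.univ.val.bind (fun v => Multiset.replicate (Δ - G.degree v) ({v} : Finset V)))
      = Δ + 1 := by
  rw [Multiset.countP_add, Multiset.countP_map, countP_bind]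
  have h1 : Multiset.card (Multiset.filter (fun a => u ∈ insert a (G.neighborFinset a)) Finset.univ.val)
      = G.degree u + 1 := by
    have : Multiset.filter (fun a => u ∈ insert a (G.neighborFinset a)) Finset.univ.val
        = (Finset.univ.filter (fun a => a ∈ insert u (G.neighborFinset u))).val := by
      rw [Finset.filter_val]
      apply Multiset.filter_congr
      intro a _
      simp only [Finset.mem_insert, SimpleGraph.mem_neighborFinset]
      constructor
      · rintro (rfl | h); · left; rfl
        · right; exact h.symm
      · rintro (rfl | h); · left; rfl
        · right; exact h.symm
    rw [this]
    have : Finset.univ.filter (fun a => a ∈ insert u (G.neighborFinset u))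
        = insert u (G.neighborFinset u) := by
      ext a; simp
    rw [this]
    show (insert u (G.neighborFinset u)).card = G.degree u + 1
    rw [Finset.card_insert_of_notMem (SimpleGraph.notMem_neighborFinset_self G u),
      SimpleGraph.card_neighborFinset_eq_degree]
  have h2 : ((Finset.univ.val.map
      (fun v => Multiset.countP (fun A => u ∈ A) (Multiset.replicate (Δ - G.degree v) ({v} : Finset V))))).sum
      = Δ - G.degree u := by
    have : ∀ v : V, Multiset.countP (fun A => u ∈ A) (Multiset.replicate (Δ - G.degree v) ({v} : Finset V))
        = if u = v then Δ - G.degree v else 0 := by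
      intro v
      rw [countP_replicate]
      simp [Finset.mem_singleton]
    simp only [this]
    have : ((Finset.univ.val.map (fun v => if u = v then Δ - G.degree v else 0))).sum
        = ∑ v, if u = v then Δ - G.degree v else 0 := rfl
    rw [this, Finset.sum_ite_eq]
    simp

  rw [h1, h2]
  have := hdeg u
  omega


theorem dominating_sets_bound {V : Type*} [Fintype V] [DecidableEq V]
    (G : SimpleGraph V) [DecidableRel G.Adj] (Δ : ℕ)
    (hdeg : ∀ v, G.degree v ≤ Δ) :
    Nat.card {D : Finset V // ∀ v ∉ D, ∃ u ∈ D, G.Adj u v} ^ (Δ + 1)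
      ≤ (2 ^ (Δ + 1) - 1) ^ (Fintype.card V) := by
  set F : Finset (Finset V) :=
    Finset.univ.filter (fun D : Finset V => ∀ v ∉ D, ∃ u ∈ D, G.Adj u v) with hFdef
  have hNat : Nat.card {D : Finset V // ∀ v ∉ D, ∃ u ∈ D, G.Adj u v} = F.card := by
    rw [Nat.card_eq_fintype_card, Fintype.card_subtype]
  set Nc : V → Finset V := fun v => insert v (G.neighborFinset v) with hNcdef
  set C : Multiset (Finset V) :=
    (Finset.univ.val.map Nc)
      + Finset.univ.val.bind (fun v => Multiset.replicate (Δ - G.degree v) ({v} : Finset V))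
    with hCdef
  have hFmem : ∀ D ∈ F, ∀ v ∉ D, ∃ u ∈ D, G.Adj u v := by
    intro D hD
    exact (Finset.mem_filter.mp hD).2
  have hFne : F.Nonempty := by
    refine ⟨Finset.univ, Finset.mem_filter.mpr ⟨Finset.mem_univ _, ?_⟩⟩
    intro v hv
    exact absurd (Finset.mem_univ v) hv
  have hmain := shearer (Δ + 1) Finset.univ C (fun A _ => Finset.subset_univ A)
    (fun v _ => count_cover G Δ hdeg v) F hFne (fun D _ => Finset.subset_univ D)
  -- trace bounds
  have htrN : ∀ v, tr F (Nc v) ≤ 2 ^ (G.degree v + 1) - 1 := by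
    intro v
    have hcardN : (Nc v).card = G.degree v + 1 := by
      rw [hNcdef]
      show (insert v (G.neighborFinset v)).card = G.degree v + 1
      rw [Finset.card_insert_of_notMem (SimpleGraph.notMem_neighborFinset_self G v),
        SimpleGraph.card_neighborFinset_eq_degree]
    have hsub : F.image (· ∩ Nc v) ⊆ (Nc v).powerset.erase ∅ := by
      intro T hT
      obtain ⟨D, hD, rfl⟩ := Finset.mem_image.mp hT
      refine Finset.mem_erase.mpr ⟨?_, Finset.mem_powerset.mpr Finset.inter_subset_right⟩
      rw [← Finset.nonempty_iff_ne_empty]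
      by_cases hvD : v ∈ D
      · exact ⟨v, Finset.mem_inter.mpr ⟨hvD, Finset.mem_insert_self _ _⟩⟩
      · obtain ⟨u, hu, hadj⟩ := hFmem D hD v hvD
        refine ⟨u, Finset.mem_inter.mpr ⟨hu, ?_⟩⟩
        exact Finset.mem_insert_of_mem ((G.mem_neighborFinset v u).mpr hadj.symm)
    calc tr F (Nc v) ≤ ((Nc v).powerset.erase ∅).card := Finset.card_le_card hsub
      _ = 2 ^ (G.degree v + 1) - 1 := by
        rw [Finset.card_erase_of_mem (Finset.empty_mem_powerset _), Finset.card_powerset, hcardN]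
  have htrS : ∀ v : V, tr F ({v} : Finset V) ≤ 2 := by
    intro v
    have hsub : F.image (· ∩ ({v} : Finset V)) ⊆ ({v} : Finset V).powerset := by
      intro T hT
      obtain ⟨D, hD, rfl⟩ := Finset.mem_image.mp hT
      exact Finset.mem_powerset.mpr Finset.inter_subset_right
    calc tr F ({v} : Finset V) ≤ ({v} : Finset V).powerset.card := Finset.card_le_card hsub
      _ = 2 := by rw [Finset.card_powerset, Finset.card_singleton]; norm_num
  -- compute the product
  have hprodsplit : (C.map (fun A => tr F A)).prod
      = (∏ v, tr F (Nc v)) * ∏ v, (tr F ({v} : Finset V)) ^ (Δ - G.degree v) := by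
    rw [hCdef, Multiset.map_add, Multiset.prod_add, Multiset.map_map, Multiset.map_bind,
      Multiset.prod_bind]
    congr 1
    apply congrArg Multiset.prod
    apply Multiset.map_congr rfl
    intro v _
    show (Multiset.map (fun A => tr F A) (Multiset.replicate (Δ - G.degree v) {v})).prod
        = (tr F ({v} : Finset V)) ^ (Δ - G.degree v)
    rw [Multiset.map_replicate, Multiset.prod_replicate]
  have hbound : (C.map (fun A => tr F A)).prod ≤ (2 ^ (Δ + 1) - 1) ^ Fintype.card V := by
    rw [hprodsplit]
    have h1 : (∏ v, tr F (Nc v)) * ∏ v, (tr F ({v} : Finset V)) ^ (Δ - G.degree v)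
        ≤ (∏ v, (2 ^ (G.degree v + 1) - 1)) * ∏ v, 2 ^ (Δ - G.degree v) := by
      apply Nat.mul_le_mul
      · exact Finset.prod_le_prod' fun v _ => htrN v
      · exact Finset.prod_le_prod' fun v _ => Nat.pow_le_pow_left (htrS v) _
    refine le_trans h1 ?_
    rw [← Finset.prod_mul_distrib]
    have h2 : ∀ v : V, (2 ^ (G.degree v + 1) - 1) * 2 ^ (Δ - G.degree v) ≤ 2 ^ (Δ + 1) - 1 := by
      intro v
      have hd := hdeg v
      have he : 2 ^ (G.degree v + 1) * 2 ^ (Δ - G.degree v) = 2 ^ (Δ + 1) := by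
        rw [← pow_add]
        congr 1
        omega
      have h3 : (1:ℕ) ≤ 2 ^ (Δ - G.degree v) := Nat.one_le_two_pow
      have h4 : (2 ^ (G.degree v + 1) - 1) * 2 ^ (Δ - G.degree v)
          = 2 ^ (G.degree v + 1) * 2 ^ (Δ - G.degree v) - 2 ^ (Δ - G.degree v) := by
        rw [Nat.sub_mul, one_mul]
      omega
    calc ∏ v, (2 ^ (G.degree v + 1) - 1) * 2 ^ (Δ - G.degree v)
        ≤ ∏ _v : V, (2 ^ (Δ + 1) - 1) := Finset.prod_le_prod' fun v _ => h2 v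
      _ = (2 ^ (Δ + 1) - 1) ^ Fintype.card V := by
        rw [Finset.prod_const, Finset.card_univ]
  rw [hNat]
  exact le_trans hmain hbound
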